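/- Let (P₁,P₂,P₃,P₄) be nonzero null vectors in ℂ^{2,1}, pairwise linearly independent (representing an ordered quadruple of distinct points of ∂ℂH²). Then −2·Re(X₁+X₂) − 2·Re(X₁·conj(X₂)·e^{−2i𝔸}) + |X₁|² + |X₂|² + 1 = 0, where X₁ = X(p₁,p₂,p₃,p₄), X₂ = X(p₁,p₃,p₂,p₄), and 𝔸 = 𝔸(p₁,p₂,p₃). -/

import Mathlib

open Complex Matrix
open scoped ComplexConjugate

noncomputable section

/-- The Hermitian form of signature `(n,1)` on `ℂ^{n+1}`:
`⟨Z,W⟩ = Z₁·conj W_{n+1} + Z₂·conj W₂ + ⋯ + Z_n·conj W_n + Z_{n+1}·conj W₁`. -/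
def herm {n : ℕ} (Z W : Fin (n + 1) → ℂ) : ℂ :=
  Z 0 * conj (W (Fin.last n)) + Z (Fin.last n) * conj (W 0) +
    ∑ i ∈ Finset.univ.filter (fun i : Fin (n + 1) => i ≠ 0 ∧ i ≠ Fin.last n),
      Z i * conj (W i)

/-- The Gram matrix of a quadruple of vectors. -/
def gram {n : ℕ} (P : Fin 4 → Fin (n + 1) → ℂ) : Matrix (Fin 4) (Fin 4) ℂ :=
  fun i j => herm (P i) (P j)

/-- A quadruple of nonzero null vectors, pairwise linearly independent. -/
def IsNullQuadruple {n : ℕ} (P : Fin 4 → Fin (n + 1) → ℂ) : Prop :=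
  (∀ i, P i ≠ 0) ∧ (∀ i, herm (P i) (P i) = 0) ∧
    ∀ i j, i ≠ j → LinearIndependent ℂ ![P i, P j]

/-- The Korányi–Reimann complex cross-ratio. -/
def crossRatio {n : ℕ} (P₁ P₂ P₃ P₄ : Fin (n + 1) → ℂ) : ℂ :=
  (herm P₃ P₁ * herm P₄ P₂) / (herm P₄ P₁ * herm P₃ P₂)

/-- Cartan's angular invariant. -/
def cartan {n : ℕ} (P₁ P₂ P₃ : Fin (n + 1) → ℂ) : ℝ :=
  (-(herm P₁ P₂ * herm P₂ P₃ * herm P₃ P₁)).arg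

/-- `G` is the normalized Gram matrix of the quadruple `P`. -/
def IsNormalizedGram {n : ℕ} (P : Fin 4 → Fin (n + 1) → ℂ)
    (G : Matrix (Fin 4) (Fin 4) ℂ) : Prop :=
  (∃ d : Fin 4 → ℂ, (∀ i, d i ≠ 0) ∧
      G = (Matrix.diagonal d)ᴴ * gram P * Matrix.diagonal d) ∧
    G 0 1 = 1 ∧ G 1 2 = 1 ∧ G 2 3 = 1 ∧ ‖G 0 2‖ = 1

/-- Two quadruples are congruent if a linear map preserving the Hermitian form
sends one to the other up to nonzero scalars. -/
def CongruentQuad {n : ℕ} (P P' : Fin 4 → Fin (n + 1) → ℂ) : Prop :=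
  ∃ A : (Fin (n + 1) → ℂ) →ₗ[ℂ] (Fin (n + 1) → ℂ),
    (∀ Z W, herm (A Z) (A W) = herm Z W) ∧
    ∃ lam : Fin 4 → ℂ, (∀ i, lam i ≠ 0) ∧ ∀ i, A (P i) = lam i • P' i


lemma herm3 (Z W : Fin 3 → ℂ) :
    herm Z W = Z 0 * conj (W 2) + Z 2 * conj (W 0) + Z 1 * conj (W 1) := by
  have h : (Finset.univ.filter (fun i : Fin 3 => i ≠ 0 ∧ i ≠ Fin.last 2)) = {1} := by decide
  rw [herm, h, Finset.sum_singleton]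
  rfl

lemma herm_conj (Z W : Fin 3 → ℂ) : herm W Z = conj (herm Z W) := by
  simp [herm3]; ring

lemma conj_mul_self_eq_zero {z : ℂ} (h : z * conj z = 0) : z = 0 := by
  rcases mul_eq_zero.mp h with h | h
  · exact h
  · exact (map_eq_zero _).mp h

lemma aux_prop (Z W : Fin 3 → ℂ) (h0 : Z 0 ≠ 0)
    (hZZ : herm Z Z = 0) (hWW : herm W W = 0) (hZW : herm Z W = 0) :
    ∃ c : ℂ, W = c • Z := by
  have hWZ : herm W Z = 0 := by rw [herm_conj, hZW, map_zero]
  rw [herm3] at hZZ hWW hZW hWZ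
  have hu1 : W 1 * Z 0 - W 0 * Z 1 = 0 := by
    refine conj_mul_self_eq_zero ?_
    have : conj (W 1 * Z 0 - W 0 * Z 1) = conj (W 1) * conj (Z 0) - conj (W 0) * conj (Z 1) := by
      simp
    rw [this]
    linear_combination Z 0 * conj (Z 0) * hWW - conj (W 0) * Z 0 * hWZ
      - W 0 * conj (Z 0) * hZW + W 0 * conj (W 0) * hZZ
  have hu2 : W 2 * Z 0 - W 0 * Z 2 = 0 := by
    have h : conj (Z 0) * (W 2 * Z 0 - W 0 * Z 2) = 0 := by
      linear_combination Z 0 * hWZ - conj (Z 1) * hu1 - W 0 * hZZ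
    rcases mul_eq_zero.mp h with h | h
    · exact absurd ((map_eq_zero _).mp h) h0
    · exact h
  refine ⟨W 0 / Z 0, ?_⟩
  funext k
  fin_cases k
  · show W 0 = (W 0 / Z 0) * Z 0
    field_simp
  · show W 1 = (W 0 / Z 0) * Z 1
    field_simp
    linear_combination hu1
  · show W 2 = (W 0 / Z 0) * Z 2
    field_simp
    linear_combination hu2

lemma aux_prop2 (Z W : Fin 3 → ℂ) (h0 : Z 2 ≠ 0)
    (hZZ : herm Z Z = 0) (hWW : herm W W = 0) (hZW : herm Z W = 0) :
    ∃ c : ℂ, W = c • Z := by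
  have hWZ : herm W Z = 0 := by rw [herm_conj, hZW, map_zero]
  rw [herm3] at hZZ hWW hZW hWZ
  have hu1 : W 1 * Z 2 - W 2 * Z 1 = 0 := by
    refine conj_mul_self_eq_zero ?_
    have : conj (W 1 * Z 2 - W 2 * Z 1) = conj (W 1) * conj (Z 2) - conj (W 2) * conj (Z 1) := by
      simp
    rw [this]
    linear_combination Z 2 * conj (Z 2) * hWW - conj (W 2) * Z 2 * hWZ
      - W 2 * conj (Z 2) * hZW + W 2 * conj (W 2) * hZZ
  have hu0 : W 0 * Z 2 - W 2 * Z 0 = 0 := by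
    have h : conj (Z 2) * (W 0 * Z 2 - W 2 * Z 0) = 0 := by
      linear_combination Z 2 * hWZ - conj (Z 1) * hu1 - W 2 * hZZ
    rcases mul_eq_zero.mp h with h | h
    · exact absurd ((map_eq_zero _).mp h) h0
    · exact h
  refine ⟨W 2 / Z 2, ?_⟩
  funext k
  fin_cases k
  · show W 0 = (W 2 / Z 2) * Z 0
    field_simp
    linear_combination hu0
  · show W 1 = (W 2 / Z 2) * Z 1
    field_simp
    linear_combination hu1
  · show W 2 = (W 2 / Z 2) * Z 2
    field_simp

lemma null_prop (Z W : Fin 3 → ℂ) (hZ : Z ≠ 0)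
    (hZZ : herm Z Z = 0) (hWW : herm W W = 0) (hZW : herm Z W = 0) :
    ∃ c : ℂ, W = c • Z := by
  by_cases h0 : Z 0 = 0
  · have hZZ' := hZZ
    rw [herm3] at hZZ'
    simp only [h0, map_zero, zero_mul, mul_zero, zero_add, add_zero] at hZZ'
    have hZ1 : Z 1 = 0 := conj_mul_self_eq_zero hZZ'
    have hZ2 : Z 2 ≠ 0 := by
      intro h2
      apply hZ
      funext k
      fin_cases k
      · exact h0
      · exact hZ1
      · exact h2
    exact aux_prop2 Z W hZ2 hZZ hWW hZW
  · exact aux_prop Z W h0 hZZ hWW hZW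

lemma gram_det_zero (P : Fin 4 → Fin 3 → ℂ) : (gram P).det = 0 := by
  have hdep : ¬ LinearIndependent ℂ P := by
    intro h
    have h1 := h.fintype_card_le_finrank
    rw [Module.finrank_fintype_fun_eq_card] at h1
    simp at h1
  obtain ⟨g, hsum, i, hgi⟩ := Fintype.not_linearIndependent_iff.mp hdep
  have hg0 : g ≠ 0 := fun h => hgi (by rw [h]; rfl)
  have hk : ∀ k : Fin 3, g 0 * P 0 k + g 1 * P 1 k + g 2 * P 2 k + g 3 * P 3 k = 0 := by
    intro k
    have := congrFun hsum k
    simpa [Fin.sum_univ_four] using this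
  apply Matrix.exists_vecMul_eq_zero_iff.mp
  refine ⟨g, hg0, ?_⟩
  funext j
  simp only [Matrix.vecMul, dotProduct, _root_.gram, herm3, Fin.sum_univ_four, Pi.zero_apply]
  linear_combination conj (P j 2) * hk 0 + conj (P j 0) * hk 2 + conj (P j 1) * hk 1

lemma det_fin_four' (M : Matrix (Fin 4) (Fin 4) ℂ) :
    M.det = M 0 0*M 1 1*M 2 2*M 3 3 - M 0 0*M 1 1*M 2 3*M 3 2 - M 0 0*M 1 2*M 2 1*M 3 3 + M 0 0*M 1 2*M 2 3*M 3 1 + M 0 0*M 1 3*M 2 1*M 3 2 - M 0 0*M 1 3*M 2 2*M 3 1 - M 0 1*M 1 0*M 2 2*M 3 3 + M 0 1*M 1 0*M 2 3*M 3 2 + M 0 1*M 1 2*M 2 0*M 3 3 - M 0 1*M 1 2*M 2 3*M 3 0 - M 0 1*M 1 3*M 2 0*M 3 2 + M 0 1*M 1 3*M 2 2*M 3 0 + M 0 2*M 1 0*M 2 1*M 3 3 - M 0 2*M 1 0*M 2 3*M 3 1 - M 0 2*M 1 1*M 2 0*M 3 3 + M 0 2*M 1 1*M 2 3*M 3 0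 + M 0 2*M 1 3*M 2 0*M 3 1 - M 0 2*M 1 3*M 2 1*M 3 0 - M 0 3*M 1 0*M 2 1*M 3 2 + M 0 3*M 1 0*M 2 2*M 3 1 + M 0 3*M 1 1*M 2 0*M 3 2 - M 0 3*M 1 1*M 2 2*M 3 0 - M 0 3*M 1 2*M 2 0*M 3 1 + M 0 3*M 1 2*M 2 1*M 3 0 := by
  rw [Matrix.det_succ_row_zero]
  simp (config := { decide := true }) only [Fin.sum_univ_succ, Matrix.det_fin_three, Matrix.submatrix_apply, Fin.succAbove, Fin.isValue, show (Fin.succ 2 : Fin 4) = 3 from rfl, show (Fin.castSucc 2 : Fin 4) = 2 from rfl, if_true, if_false]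
  norm_num [show (Fin.succ 2 : Fin 4) = 3 from rfl, show ((3 : Fin 4) : ℕ) = 3 from rfl]
  ring

/-- the basic relation between `X₁`, `X₂` and `𝔸` for quadruples
in `∂ℂH²`. -/
theorem stmt9 (P : Fin 4 → Fin 3 → ℂ) (hP : IsNullQuadruple (n := 2) P)
    (X₁ X₂ : ℂ) (A : ℝ)
    (hX₁ : X₁ = crossRatio (P 0) (P 1) (P 2) (P 3))
    (hX₂ : X₂ = crossRatio (P 0) (P 2) (P 1) (P 3))
    (hA : A = cartan (P 0) (P 1) (P 2)) :
    -2 * (X₁ + X₂).re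
      - 2 * (X₁ * conj X₂ * Complex.exp (-(2 * (A : ℂ) * Complex.I))).re
      + ‖X₁‖ ^ 2 + ‖X₂‖ ^ 2 + 1 = 0 := by
  obtain ⟨hne0, hnull, hli⟩ := hP
  have hg : ∀ i j : Fin 4, i ≠ j → herm (P i) (P j) ≠ 0 := by
    intro i j hij h
    have hji : herm (P j) (P i) = 0 := by rw [herm_conj, h, map_zero]
    obtain ⟨c, hc⟩ := null_prop (P j) (P i) (hne0 j) (hnull j) (hnull i) hji
    have hl := hli i j hij
    rw [linearIndependent_fin2] at hl
    exact hl.2 c hc.symm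
  set a := herm (P 0) (P 1) with ha'
  set b := herm (P 0) (P 2) with hb'
  set c := herm (P 0) (P 3) with hc'
  set d := herm (P 1) (P 2) with hd'
  set e := herm (P 1) (P 3) with he'
  set f := herm (P 2) (P 3) with hf'
  have ha : a ≠ 0 := hg 0 1 (by decide)
  have hb : b ≠ 0 := hg 0 2 (by decide)
  have hc : c ≠ 0 := hg 0 3 (by decide)
  have hd : d ≠ 0 := hg 1 2 (by decide)
  have he : e ≠ 0 := hg 1 3 (by decide)
  have hf : f ≠ 0 := hg 2 3 (by decide)
  have hdet := gram_det_zero P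
  rw [det_fin_four'] at hdet
  simp only [_root_.gram, hnull, herm_conj (P 0) (P 1), herm_conj (P 0) (P 2),
    herm_conj (P 0) (P 3), herm_conj (P 1) (P 2), herm_conj (P 1) (P 3),
    herm_conj (P 2) (P 3), ← ha', ← hb', ← hc', ← hd', ← he', ← hf'] at hdet
  rw [crossRatio, herm_conj (P 0) (P 2), herm_conj (P 1) (P 3), herm_conj (P 0) (P 3),
    herm_conj (P 1) (P 2), ← hb', ← hc', ← hd', ← he'] at hX₁
  rw [crossRatio, herm_conj (P 0) (P 1), herm_conj (P 2) (P 3), herm_conj (P 0) (P 3),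
    ← ha', ← hc', ← hd', ← hf'] at hX₂
  rw [cartan, herm_conj (P 0) (P 2), ← ha', ← hb', ← hd'] at hA
  set w : ℂ := -(a * d * conj b) with hw'
  have hw : w ≠ 0 := by
    rw [hw', neg_ne_zero]
    exact mul_ne_zero (mul_ne_zero ha hd) ((map_ne_zero _).mpr hb)
  have hmc : w * conj w = ((‖w‖ : ℝ) : ℂ) ^ 2 := by
    rw [Complex.mul_conj]
    norm_cast
    exact (Complex.sq_norm w).symm
  have hexp : Complex.exp (-(2 * (A : ℂ) * Complex.I)) = conj w / w := by
    have h1 : Complex.exp ((A : ℂ) * Complex.I) * (‖w‖ : ℂ) = w := by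
      rw [hA, mul_comm]
      exact Complex.norm_mul_exp_arg_mul_I w
    have h2 : -(2 * (A : ℂ) * Complex.I) = -((A:ℂ)*Complex.I) + -((A:ℂ)*Complex.I) := by ring
    have hAbs : (‖w‖ : ℂ) ≠ 0 := Complex.ofReal_ne_zero.mpr (norm_ne_zero_iff.mpr hw)
    have hexpAI : Complex.exp ((A:ℂ)*Complex.I) ≠ 0 := Complex.exp_ne_zero _
    have h4 : (conj w * Complex.exp ((A:ℂ)*Complex.I) ^ 2 - w) * (‖w‖ : ℂ) ^ 2 = 0 := by
      linear_combination (conj w * (Complex.exp ((A:ℂ)*Complex.I) * (‖w‖ : ℂ) + w)) * h1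
        + w * hmc
    have h3 : conj w * Complex.exp ((A:ℂ)*Complex.I) ^ 2 - w = 0 := by
      rcases mul_eq_zero.mp h4 with h | h
      · exact h
      · exact absurd h (pow_ne_zero 2 hAbs)
    rw [h2, Complex.exp_add, Complex.exp_neg, eq_div_iff hw]
    field_simp
    linear_combination -h3
  have hC : conj c ≠ 0 := (map_ne_zero _).mpr hc
  have hD : conj d ≠ 0 := (map_ne_zero _).mpr hd
  have hA2 : conj a ≠ 0 := (map_ne_zero _).mpr ha
  have hB2 : conj b ≠ 0 := (map_ne_zero _).mpr hb
  have hE2 : conj e ≠ 0 := (map_ne_zero _).mpr he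
  have hF2 : conj f ≠ 0 := (map_ne_zero _).mpr hf
  have hT : X₁ * conj X₂ * Complex.exp (-(2 * (A : ℂ) * Complex.I))
      = conj a * b * conj e * f / (c * conj c * d * conj d) := by
    rw [hX₁, hX₂, hexp, hw']
    simp only [map_div₀, _root_.map_mul, map_neg, Complex.conj_conj]
    field_simp [ha, hb, hc, hd, hC, hD, hA2, hB2]
  set T := X₁ * conj X₂ * Complex.exp (-(2 * (A:ℂ) * Complex.I)) with hTdef
  have hX1m : X₁ * (conj c * conj d) = conj b * conj e := by
    rw [hX₁]; field_simp
  have hX2m : X₂ * (conj c * d) = conj a * conj f := by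
    rw [hX₂]; field_simp
  have hX1cm : conj X₁ * (c * d) = b * e := by
    rw [hX₁]; simp only [map_div₀, _root_.map_mul, Complex.conj_conj]; field_simp
  have hX2cm : conj X₂ * (c * conj d) = a * f := by
    rw [hX₂]; simp only [map_div₀, _root_.map_mul, Complex.conj_conj]; field_simp
  have hTm : T * (c * conj c * d * conj d) = conj a * b * conj e * f := by
    rw [hT]; field_simp
  have hTcm : conj T * (c * conj c * d * conj d) = a * conj b * e * conj f := by
    have h := congrArg conj hTm
    simp only [_root_.map_mul, Complex.conj_conj] at h
    linear_combination h
  have hEden : (-(X₁ + X₂) - (conj X₁ + conj X₂) - (T + conj T) + X₁ * conj X₁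
      + X₂ * conj X₂ + 1) * (c * conj c * d * conj d) = 0 := by
    linear_combination (-(c*d) + conj X₁ * c * d) * hX1m + (-(conj c * conj d) + conj b * conj e) * hX1cm
      + (-(c * conj d) + conj X₂ * c * conj d) * hX2m + (-(conj c * d) + conj a * conj f) * hX2cm
      - hTm - hTcm + hdet
  have hden : (c * conj c * d * conj d) ≠ 0 :=
    mul_ne_zero (mul_ne_zero (mul_ne_zero hc hC) hd) hD
  have hE : (-(X₁ + X₂) - (conj X₁ + conj X₂) - (T + conj T) + X₁ * conj X₁
      + X₂ * conj X₂ + 1) = 0 := by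
    rcases mul_eq_zero.mp hEden with h | h
    · exact h
    · exact absurd h hden
  have hre : ∀ z : ℂ, (z.re : ℂ) = (z + conj z) / 2 := fun z => by
    rw [Complex.add_conj]; push_cast; ring
  have habs2 : ∀ z : ℂ, ((‖z‖ : ℝ) : ℂ) ^ 2 = z * conj z := fun z => by
    rw [Complex.mul_conj]; norm_cast; exact Complex.sq_norm z
  rw [← Complex.ofReal_eq_zero]
  push_cast
  rw [hre, hre, habs2, habs2]
  simp only [map_add]
  linear_combination hE
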